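/- arXiv:2603.00196 — 3 statements merged into one kernel-verified Lean document; each statement's English description precedes it below -/
import Mathlib

section
/- Let m = (m₁, …, m_N) have i.i.d. coordinates uniform on [−λ/2, λ/2], and let e₁, e₂ ∈ ℝ^N with δ = e₁ − e₂. Then the total variation distance between the distributions of e₁ + m and e₂ + m equals 1 − ∏_{i=1}^N max(1 − |δ_i|/λ, 0). -/
open MeasureTheory
open scoped ENNReal

/-- Total variation distance between two measures, as the supremum over
measurable sets of the discrepancy of their (real-valued) masses. -/
noncomputable def tvDist {α : Type*} [MeasurableSpace α] (μ ν : Measure α) : ℝ :=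
  ⨆ s : {s : Set α // MeasurableSet s}, |(μ s.1).toReal - (ν s.1).toReal|

theorem tv_product_shifted_uniform {N : ℕ} (lam : ℝ) (hlam : 0 < lam)
    (μ : Measure ℝ) [IsProbabilityMeasure μ]
    (hμ : μ = (ENNReal.ofReal lam)⁻¹ • volume.restrict (Set.Icc (-(lam/2)) (lam/2)))
    (e₁ e₂ δ : Fin N → ℝ) (hδ : δ = e₁ - e₂) :
    tvDist (Measure.map (fun m => e₁ + m) (Measure.pi fun _ : Fin N => μ))
           (Measure.map (fun m => e₂ + m) (Measure.pi fun _ : Fin N => μ)) =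
      1 - ∏ i : Fin N, max (1 - |δ i| / lam) 0 := by
  subst hδ
  set c : ℝ≥0∞ := (ENNReal.ofReal lam)⁻¹ with hc
  have hlam0 : ENNReal.ofReal lam ≠ 0 := by
    simp [ENNReal.ofReal_eq_zero, not_le, hlam]
  have hlamtop : ENNReal.ofReal lam ≠ ⊤ := ENNReal.ofReal_ne_top
  -- one-dimensional translated uniform measure
  have h1 : ∀ a : ℝ, Measure.map (fun x => a + x) μ
      = c • volume.restrict (Set.Icc (a - lam / 2) (a + lam / 2)) := by
    intro a
    rw [hμ, Measure.map_smul]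
    congr 1
    have hpre : (fun x => a + x) ⁻¹' Set.Icc (a - lam / 2) (a + lam / 2)
        = Set.Icc (-(lam / 2)) (lam / 2) := by
      rw [Set.preimage_const_add_Icc]
      congr 1 <;> ring
    calc Measure.map (fun x => a + x) (volume.restrict (Set.Icc (-(lam / 2)) (lam / 2)))
        = Measure.map (fun x => a + x)
            (volume.restrict ((fun x => a + x) ⁻¹' Set.Icc (a - lam / 2) (a + lam / 2))) := by
          rw [hpre]
      _ = (Measure.map (fun x => a + x) volume).restrict (Set.Icc (a - lam / 2) (a + lam / 2)) :=
          (Measure.restrict_map (measurable_const_add a) measurableSet_Icc).symm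
      _ = volume.restrict (Set.Icc (a - lam / 2) (a + lam / 2)) := by
          rw [Measure.IsAddLeftInvariant.map_add_left_eq_self (μ := (volume : Measure ℝ)) a]
  have hprob1 : ∀ a : ℝ,
      IsProbabilityMeasure (c • volume.restrict (Set.Icc (a - lam / 2) (a + lam / 2))) := by
    intro a
    rw [← h1 a]
    exact Measure.isProbabilityMeasure_map (measurable_const_add a).aemeasurable
  -- the mapped product measure is a rescaled restricted volume on a box
  have hmap : ∀ e : Fin N → ℝ,
      Measure.map (fun m => e + m) (Measure.pi fun _ : Fin N => μ)
        = (c ^ N) • volume.restrict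
            (Set.univ.pi fun i => Set.Icc (e i - lam / 2) (e i + lam / 2)) := by
    intro e
    haveI := fun i : Fin N => hprob1 (e i)
    have hpres : MeasurePreserving (fun m : Fin N → ℝ => e + m)
        (Measure.pi fun _ : Fin N => μ)
        (Measure.pi fun i => c • volume.restrict (Set.Icc (e i - lam / 2) (e i + lam / 2))) :=
      measurePreserving_pi (fun _ : Fin N => μ)
        (fun i => c • volume.restrict (Set.Icc (e i - lam / 2) (e i + lam / 2)))
        (fun i => ⟨measurable_const_add (e i), h1 (e i)⟩)
    rw [hpres.map_eq]
    refine Measure.pi_eq fun s hs => ?_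
    rw [Measure.smul_apply, Measure.restrict_apply (MeasurableSet.univ_pi hs),
      ← Set.pi_inter_distrib, volume_pi_pi, smul_eq_mul]
    simp only [Measure.smul_apply, Measure.restrict_apply (hs _), smul_eq_mul]
    rw [Finset.prod_mul_distrib, Finset.prod_const, Finset.card_univ, Fintype.card_fin]
  -- mass formula
  have hmass : ∀ (e : Fin N → ℝ) (s : Set (Fin N → ℝ)), MeasurableSet s →
      Measure.map (fun m => e + m) (Measure.pi fun _ : Fin N => μ) s
        = c ^ N * volume (s ∩ Set.univ.pi fun i => Set.Icc (e i - lam / 2) (e i + lam / 2)) := by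
    intro e s hs
    rw [hmap e, Measure.smul_apply, Measure.restrict_apply hs, smul_eq_mul]
  -- box total mass
  have hB1mass : ∀ e : Fin N → ℝ,
      c ^ N * volume (Set.univ.pi fun i => Set.Icc (e i - lam / 2) (e i + lam / 2)) = 1 := by
    intro e
    rw [volume_pi_pi]
    have hv : ∀ i : Fin N,
        volume (Set.Icc (e i - lam / 2) (e i + lam / 2)) = ENNReal.ofReal lam := by
      intro i; rw [Real.volume_Icc]; congr 1; ring
    simp only [hv]
    rw [Finset.prod_const, Finset.card_univ, Fintype.card_fin, ← mul_pow,
      ENNReal.inv_mul_cancel hlam0 hlamtop, one_pow]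
  -- notation for the two boxes
  set B₁ : Set (Fin N → ℝ) :=
    Set.univ.pi fun i => Set.Icc (e₁ i - lam / 2) (e₁ i + lam / 2) with hB₁def
  set B₂ : Set (Fin N → ℝ) :=
    Set.univ.pi fun i => Set.Icc (e₂ i - lam / 2) (e₂ i + lam / 2) with hB₂def
  have hB₁ : MeasurableSet B₁ := MeasurableSet.univ_pi fun i => measurableSet_Icc
  have hB₂ : MeasurableSet B₂ := MeasurableSet.univ_pi fun i => measurableSet_Icc
  set Q : ℝ := ∏ i : Fin N, max (1 - |(e₁ - e₂) i| / lam) 0 with hQdef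
  have hQ0 : 0 ≤ Q := Finset.prod_nonneg fun i _ => le_max_right _ _
  have hQ1 : Q ≤ 1 := by
    refine Finset.prod_le_one (fun i _ => le_max_right _ _) fun i _ => ?_
    refine max_le ?_ zero_le_one
    have : 0 ≤ |(e₁ - e₂) i| / lam := div_nonneg (abs_nonneg _) hlam.le
    linarith
  -- per-coordinate overlap
  have hq : ∀ i : Fin N,
      c * volume (Set.Icc (e₁ i - lam / 2) (e₁ i + lam / 2)
          ∩ Set.Icc (e₂ i - lam / 2) (e₂ i + lam / 2))
        = ENNReal.ofReal (max (1 - |(e₁ - e₂) i| / lam) 0) := by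
    intro i
    rw [Set.Icc_inter_Icc, Real.volume_Icc]
    have h2 : (e₁ i + lam / 2) ⊓ (e₂ i + lam / 2) - (e₁ i - lam / 2) ⊔ (e₂ i - lam / 2)
        = lam - |e₁ i - e₂ i| := by
      have hms := max_sub_min_eq_abs (e₁ i) (e₂ i)
      have hms2 : |e₂ i - e₁ i| = |e₁ i - e₂ i| := abs_sub_comm _ _
      simp only [min_add_add_right, max_sub_sub_right]
      linarith
    rw [h2]
    have habs : |(e₁ - e₂) i| = |e₁ i - e₂ i| := by simp
    have hdiv : (lam - |e₁ i - e₂ i|) / lam = 1 - |e₁ i - e₂ i| / lam := by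
      rw [sub_div, div_self hlam.ne']
    have hmax : ENNReal.ofReal (max (1 - |(e₁ - e₂) i| / lam) 0)
        = ENNReal.ofReal (1 - |e₁ i - e₂ i| / lam) := by
      rw [habs]
      rcases le_total (1 - |e₁ i - e₂ i| / lam) 0 with h | h
      · rw [max_eq_right h, ENNReal.ofReal_zero, eq_comm, ENNReal.ofReal_eq_zero]
        exact h
      · rw [max_eq_left h]
    rw [hmax, ← hdiv, ENNReal.ofReal_div_of_pos hlam, ENNReal.div_eq_inv_mul]
  -- overlap mass
  have hPval : c ^ N * volume (B₁ ∩ B₂) = ENNReal.ofReal Q := by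
    rw [hB₁def, hB₂def, ← Set.pi_inter_distrib, volume_pi_pi]
    have hstep : c ^ N * (∏ i : Fin N, volume (Set.Icc (e₁ i - lam / 2) (e₁ i + lam / 2)
          ∩ Set.Icc (e₂ i - lam / 2) (e₂ i + lam / 2)))
        = ∏ i : Fin N, (c * volume (Set.Icc (e₁ i - lam / 2) (e₁ i + lam / 2)
          ∩ Set.Icc (e₂ i - lam / 2) (e₂ i + lam / 2))) := by
      rw [Finset.prod_mul_distrib, Finset.prod_const, Finset.card_univ, Fintype.card_fin]
    rw [hstep, hQdef, ENNReal.ofReal_prod_of_nonneg fun i _ => le_max_right _ _]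
    exact Finset.prod_congr rfl fun i _ => hq i
  have hPQtoReal : (c ^ N * volume (B₁ ∩ B₂)).toReal = Q := by
    rw [hPval, ENNReal.toReal_ofReal hQ0]
  -- finiteness of masses
  have hfin : ∀ (e : Fin N → ℝ) (s : Set (Fin N → ℝ)),
      c ^ N * volume (s ∩ Set.univ.pi fun i => Set.Icc (e i - lam / 2) (e i + lam / 2)) ≤ 1 := by
    intro e s
    calc c ^ N * volume (s ∩ Set.univ.pi fun i => Set.Icc (e i - lam / 2) (e i + lam / 2))
        ≤ c ^ N * volume (Set.univ.pi fun i => Set.Icc (e i - lam / 2) (e i + lam / 2)) :=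
          mul_le_mul_right (measure_mono Set.inter_subset_right) _
      _ = 1 := hB1mass e
  -- generic overlap inequality
  have hvol : ∀ (s A A' : Set (Fin N → ℝ)), MeasurableSet A' →
      volume (s ∩ A) + volume (A ∩ A') ≤ volume (s ∩ A') + volume A := by
    intro s A A' hA'
    have h₁ := measure_inter_add_diff (μ := (volume : Measure (Fin N → ℝ))) (s ∩ A) hA'
    have h₂ := measure_inter_add_diff (μ := (volume : Measure (Fin N → ℝ))) A hA'
    have h₃ : volume (s ∩ A ∩ A') ≤ volume (s ∩ A') :=
      measure_mono fun x hx => ⟨hx.1.1, hx.2⟩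
    have h₄ : volume ((s ∩ A) \ A') ≤ volume (A \ A') :=
      measure_mono fun x hx => ⟨hx.1.2, hx.2⟩
    calc volume (s ∩ A) + volume (A ∩ A')
        = (volume (s ∩ A ∩ A') + volume ((s ∩ A) \ A')) + volume (A ∩ A') := by rw [h₁]
      _ ≤ (volume (s ∩ A') + volume (A \ A')) + volume (A ∩ A') :=
          add_le_add (add_le_add h₃ h₄) le_rfl
      _ = volume (s ∩ A') + (volume (A ∩ A') + volume (A \ A')) := by ring
      _ = volume (s ∩ A') + volume A := by rw [h₂]
  -- one-sided real bound
  have hone : ∀ (e e' : Fin N → ℝ) (s : Set (Fin N → ℝ)),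
      (c ^ N * volume (s ∩ Set.univ.pi fun i => Set.Icc (e i - lam / 2) (e i + lam / 2))).toReal
      ≤ (c ^ N * volume (s ∩ Set.univ.pi fun i => Set.Icc (e' i - lam / 2) (e' i + lam / 2))).toReal
        + (1 - (c ^ N * volume ((Set.univ.pi fun i => Set.Icc (e i - lam / 2) (e i + lam / 2))
            ∩ Set.univ.pi fun i => Set.Icc (e' i - lam / 2) (e' i + lam / 2))).toReal) := by
    intro e e' s
    set A := Set.univ.pi fun i => Set.Icc (e i - lam / 2) (e i + lam / 2) with hA
    set A' := Set.univ.pi fun i => Set.Icc (e' i - lam / 2) (e' i + lam / 2) with hA'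
    have hA'm : MeasurableSet A' := MeasurableSet.univ_pi fun i => measurableSet_Icc
    have hineq : c ^ N * volume (s ∩ A) + c ^ N * volume (A ∩ A')
        ≤ c ^ N * volume (s ∩ A') + 1 := by
      calc c ^ N * volume (s ∩ A) + c ^ N * volume (A ∩ A')
          = c ^ N * (volume (s ∩ A) + volume (A ∩ A')) := by rw [mul_add]
        _ ≤ c ^ N * (volume (s ∩ A') + volume A) := mul_le_mul_right (hvol s A A' hA'm) _
        _ = c ^ N * volume (s ∩ A') + c ^ N * volume A := by rw [mul_add]
        _ = c ^ N * volume (s ∩ A') + 1 := by rw [hB1mass e]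
    have hX : c ^ N * volume (s ∩ A) ≠ ⊤ := ne_top_of_le_ne_top ENNReal.one_ne_top (hfin e s)
    have hY : c ^ N * volume (s ∩ A') ≠ ⊤ := ne_top_of_le_ne_top ENNReal.one_ne_top (hfin e' s)
    have hPf : c ^ N * volume (A ∩ A') ≠ ⊤ := by
      refine ne_top_of_le_ne_top ENNReal.one_ne_top ?_
      calc c ^ N * volume (A ∩ A') ≤ c ^ N * volume A :=
            mul_le_mul_right (measure_mono Set.inter_subset_left) _
        _ = 1 := hB1mass e
    have hmono := ENNReal.toReal_mono (by simp [hY]) hineq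
    rw [ENNReal.toReal_add hX hPf, ENNReal.toReal_add hY ENNReal.one_ne_top,
      ENNReal.toReal_one] at hmono
    linarith
  -- the uniform bound over measurable sets
  have hbound : ∀ s : {t : Set (Fin N → ℝ) // MeasurableSet t},
      |((Measure.map (fun m => e₁ + m) (Measure.pi fun _ : Fin N => μ)) s.1).toReal
        - ((Measure.map (fun m => e₂ + m) (Measure.pi fun _ : Fin N => μ)) s.1).toReal|
      ≤ 1 - Q := by
    rintro ⟨s, hs⟩
    rw [hmass e₁ s hs, hmass e₂ s hs, abs_sub_le_iff]
    constructor
    · have h := hone e₁ e₂ s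
      rw [hPQtoReal] at h
      linarith
    · have h := hone e₂ e₁ s
      have hQ' : (c ^ N * volume (B₂ ∩ B₁)).toReal = Q := by rw [Set.inter_comm, hPQtoReal]
      rw [hQ'] at h
      linarith
  -- the bound is attained at B₁ \ B₂
  have hs₀m : MeasurableSet (B₁ \ B₂) := hB₁.diff hB₂
  have hval2 : c ^ N * volume ((B₁ \ B₂) ∩ B₂) = 0 := by
    rw [Set.diff_inter_self]; simp
  have hsub : (B₁ \ B₂) ∩ B₁ = B₁ \ B₂ := Set.inter_eq_left.mpr Set.diff_subset
  have hsplit : c ^ N * volume (B₁ ∩ B₂) + c ^ N * volume (B₁ \ B₂) = 1 := by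
    rw [← mul_add, measure_inter_add_diff B₁ hB₂, hB1mass e₁]
  have hval1 : (c ^ N * volume ((B₁ \ B₂) ∩ B₁)).toReal = 1 - Q := by
    rw [hsub]
    have hfin' : c ^ N * volume (B₁ \ B₂) ≠ ⊤ := by
      refine ne_top_of_le_ne_top ENNReal.one_ne_top ?_
      calc c ^ N * volume (B₁ \ B₂) ≤ c ^ N * volume B₁ :=
            mul_le_mul_right (measure_mono Set.diff_subset) _
        _ = 1 := hB1mass e₁
    have hPf : c ^ N * volume (B₁ ∩ B₂) ≠ ⊤ := by rw [hPval]; exact ENNReal.ofReal_ne_top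
    have h := congrArg ENNReal.toReal hsplit
    rw [ENNReal.toReal_add hPf hfin', ENNReal.toReal_one, hPQtoReal] at h
    linarith
  have hDnonneg : (0 : ℝ) ≤ 1 - Q := by linarith
  haveI : Nonempty {t : Set (Fin N → ℝ) // MeasurableSet t} := ⟨⟨∅, MeasurableSet.empty⟩⟩
  unfold tvDist
  apply le_antisymm
  · exact ciSup_le hbound
  · have hvalue :
        |((Measure.map (fun m => e₁ + m) (Measure.pi fun _ : Fin N => μ)) (B₁ \ B₂)).toReal
          - ((Measure.map (fun m => e₂ + m) (Measure.pi fun _ : Fin N => μ)) (B₁ \ B₂)).toReal|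
        = 1 - Q := by
      rw [hmass e₁ _ hs₀m, hmass e₂ _ hs₀m, hval2, hval1]
      simp [abs_of_nonneg hDnonneg]
    rw [← hvalue]
    have hbdd : BddAbove (Set.range fun s : {t : Set (Fin N → ℝ) // MeasurableSet t} =>
        |((Measure.map (fun m => e₁ + m) (Measure.pi fun _ : Fin N => μ)) s.1).toReal
          - ((Measure.map (fun m => e₂ + m) (Measure.pi fun _ : Fin N => μ)) s.1).toReal|) :=
      ⟨1 - Q, by rintro x ⟨s, rfl⟩; exact hbound s⟩
    exact le_ciSup hbdd ⟨B₁ \ B₂, hs₀m⟩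
end

section
/- Let m ∈ ℝ^N have i.i.d. coordinates uniform on [−λ/2, λ/2] and e₁, e₂ ∈ ℝ^N. Then the total variation distance between the distributions of e₁ + m and e₂ + m is at most min(‖e₁ − e₂‖₁ / λ, 1). -/
open MeasureTheory

noncomputable def unifM (lam a : ℝ) : Measure ℝ :=
  (ENNReal.ofReal lam)⁻¹ • volume.restrict (Set.Icc (a - lam/2) (a + lam/2))

lemma unifM_isProb {lam : ℝ} (hlam : 0 < lam) (a : ℝ) :
    IsProbabilityMeasure (unifM lam a) := by
  constructor
  rw [unifM, Measure.smul_apply, Measure.restrict_apply MeasurableSet.univ,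
    Set.univ_inter, Real.volume_Icc, show a + lam/2 - (a - lam/2) = lam by ring, smul_eq_mul]
  exact ENNReal.inv_mul_cancel (ENNReal.ofReal_pos.mpr hlam).ne' ENNReal.ofReal_ne_top

lemma map_shift {lam : ℝ} (hlam : 0 < lam) (μ : Measure ℝ)
    (hμ : μ = (ENNReal.ofReal lam)⁻¹ • volume.restrict (Set.Icc (-(lam/2)) (lam/2))) (a : ℝ) :
    Measure.map (fun x => a + x) μ = unifM lam a := by
  rw [hμ, Measure.map_smul, unifM]
  congr 1
  rw [show Set.Icc (-(lam/2)) (lam/2) = (fun x => a + x) ⁻¹' Set.Icc (a - lam/2) (a + lam/2) by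
        rw [Set.preimage_const_add_Icc]; congr 1 <;> ring,
    ← Measure.restrict_map (measurable_const_add a) measurableSet_Icc,
    map_add_left_eq_self volume a]

lemma volume_diff_le (lam a b : ℝ) (hlam : 0 < lam) :
    volume (Set.Icc (a - lam/2) (a + lam/2) \ Set.Icc (b - lam/2) (b + lam/2))
      ≤ ENNReal.ofReal |a - b| := by
  rcases le_total a b with hab | hab
  · calc volume (Set.Icc (a - lam/2) (a + lam/2) \ Set.Icc (b - lam/2) (b + lam/2))
        ≤ volume (Set.Ico (a - lam/2) (b - lam/2)) := by
          apply measure_mono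
          rintro x ⟨⟨h1, h2⟩, hx⟩
          refine ⟨h1, ?_⟩
          by_contra h
          exact hx ⟨not_lt.mp h, h2.trans (by linarith)⟩
      _ ≤ ENNReal.ofReal |a - b| := by
          rw [Real.volume_Ico]
          exact ENNReal.ofReal_le_ofReal (by rw [abs_sub_comm, abs_of_nonneg (by linarith)]; linarith)
  · calc volume (Set.Icc (a - lam/2) (a + lam/2) \ Set.Icc (b - lam/2) (b + lam/2))
        ≤ volume (Set.Ioc (b + lam/2) (a + lam/2)) := by
          apply measure_mono
          rintro x ⟨⟨h1, h2⟩, hx⟩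
          refine ⟨?_, h2⟩
          by_contra h
          exact hx ⟨(by linarith : b - lam/2 ≤ x), not_lt.mp h⟩
      _ ≤ ENNReal.ofReal |a - b| := by
          rw [Real.volume_Ioc]
          exact ENNReal.ofReal_le_ofReal (by rw [abs_of_nonneg (by linarith)]; linarith)

lemma oneD {lam : ℝ} (hlam : 0 < lam) (a b : ℝ) (Q : ℝ → ENNReal)
    (hQ1 : ∀ x, Q x ≤ 1) :
    ∫⁻ x, Q x ∂(unifM lam a) ≤ (∫⁻ x, Q x ∂(unifM lam b)) + ENNReal.ofReal (|a - b| / lam) := by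
  obtain ⟨I, hI⟩ : ∃ I, I = Set.Icc (a - lam/2) (a + lam/2) := ⟨_, rfl⟩
  obtain ⟨J, hJ⟩ : ∃ J, J = Set.Icc (b - lam/2) (b + lam/2) := ⟨_, rfl⟩
  have hJm : MeasurableSet J := hJ ▸ measurableSet_Icc
  have hIJ : ∫⁻ x in I, Q x ≤ (∫⁻ x in J, Q x) + ENNReal.ofReal |a - b| := by
    rw [← lintegral_inter_add_diff Q I hJm]
    have h1 : ∫⁻ x in I ∩ J, Q x ≤ ∫⁻ x in J, Q x :=
      lintegral_mono_set Set.inter_subset_right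
    have h2 : ∫⁻ x in I \ J, Q x ≤ ENNReal.ofReal |a - b| := by
      calc ∫⁻ x in I \ J, Q x ≤ ∫⁻ _ in I \ J, 1 := lintegral_mono fun x => hQ1 x
        _ = volume (I \ J) := by simp
        _ ≤ ENNReal.ofReal |a - b| := hI ▸ hJ ▸ volume_diff_le lam a b hlam
    exact add_le_add h1 h2
  have hkey : (ENNReal.ofReal lam)⁻¹ * ENNReal.ofReal |a - b| = ENNReal.ofReal (|a - b| / lam) := by
    rw [div_eq_mul_inv, ENNReal.ofReal_mul' (by positivity), mul_comm,
      ENNReal.ofReal_inv_of_pos hlam]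
  rw [unifM, unifM, lintegral_smul_measure, lintegral_smul_measure, smul_eq_mul, smul_eq_mul, ← hI, ← hJ, ← hkey, ← mul_add]
  exact mul_le_mul_right hIJ _

lemma pi_shift_le {lam : ℝ} (hlam : 0 < lam) :
    ∀ (n : ℕ) (e₁ e₂ : Fin n → ℝ) (s : Set (Fin n → ℝ)), MeasurableSet s →
      Measure.pi (fun i => unifM lam (e₁ i)) s ≤
        Measure.pi (fun i => unifM lam (e₂ i)) s +
          ENNReal.ofReal (∑ i, |e₁ i - e₂ i| / lam) := by
  intro n
  induction n with
  | zero =>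
    intro e₁ e₂ s hs
    have he : e₁ = e₂ := funext fun i => i.elim0
    simp [he]
  | succ n ih =>
    intro e₁ e₂ s hs
    haveI : ∀ a : ℝ, IsProbabilityMeasure (unifM lam a) := fun a => unifM_isProb hlam a
    set E := MeasurableEquiv.piFinSuccAbove (fun _ : Fin (n+1) => ℝ) 0 with hE
    set t : Set (ℝ × (Fin n → ℝ)) := E.symm ⁻¹' s with htdef
    have ht : MeasurableSet t := E.symm.measurable hs
    have hps₁ : Measure.pi (fun i => unifM lam (e₁ i)) s =
        ((unifM lam (e₁ 0)).prod
          (Measure.pi fun j => unifM lam (e₁ ((0 : Fin (n+1)).succAbove j)))) t :=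
      ((measurePreserving_piFinSuccAbove (fun i => unifM lam (e₁ i)) 0).symm E
        |>.measure_preimage hs.nullMeasurableSet).symm
    have hps₂ : Measure.pi (fun i => unifM lam (e₂ i)) s =
        ((unifM lam (e₂ 0)).prod
          (Measure.pi fun j => unifM lam (e₂ ((0 : Fin (n+1)).succAbove j)))) t :=
      ((measurePreserving_piFinSuccAbove (fun i => unifM lam (e₂ i)) 0).symm E
        |>.measure_preimage hs.nullMeasurableSet).symm
    set Q₁ : ℝ → ENNReal :=
      fun x => Measure.pi (fun j => unifM lam (e₁ ((0 : Fin (n+1)).succAbove j)))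
        (Prod.mk x ⁻¹' t) with hQ₁
    set Q₂ : ℝ → ENNReal :=
      fun x => Measure.pi (fun j => unifM lam (e₂ ((0 : Fin (n+1)).succAbove j)))
        (Prod.mk x ⁻¹' t) with hQ₂
    have hQ₁le : ∀ x, Q₁ x ≤ 1 := fun x => prob_le_one
    have hslice : ∀ x : ℝ, MeasurableSet (Prod.mk x ⁻¹' t) :=
      fun x => ht.preimage measurable_prodMk_left
    have hpoint : ∀ x, Q₁ x ≤ Q₂ x +
        ENNReal.ofReal (∑ j, |e₁ ((0 : Fin (n+1)).succAbove j) -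
          e₂ ((0 : Fin (n+1)).succAbove j)| / lam) :=
      fun x => ih _ _ _ (hslice x)
    calc Measure.pi (fun i => unifM lam (e₁ i)) s
        = ∫⁻ x, Q₁ x ∂(unifM lam (e₁ 0)) := by
          rw [hps₁, Measure.prod_apply ht]
      _ ≤ (∫⁻ x, Q₁ x ∂(unifM lam (e₂ 0))) + ENNReal.ofReal (|e₁ 0 - e₂ 0| / lam) :=
          oneD hlam _ _ Q₁ hQ₁le
      _ ≤ (∫⁻ x, (Q₂ x + ENNReal.ofReal (∑ j, |e₁ ((0 : Fin (n+1)).succAbove j) -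
            e₂ ((0 : Fin (n+1)).succAbove j)| / lam)) ∂(unifM lam (e₂ 0))) +
            ENNReal.ofReal (|e₁ 0 - e₂ 0| / lam) :=
          add_le_add (lintegral_mono hpoint) le_rfl
      _ = (∫⁻ x, Q₂ x ∂(unifM lam (e₂ 0))) +
            ENNReal.ofReal (∑ j, |e₁ ((0 : Fin (n+1)).succAbove j) -
              e₂ ((0 : Fin (n+1)).succAbove j)| / lam) +
            ENNReal.ofReal (|e₁ 0 - e₂ 0| / lam) := by
          rw [lintegral_add_right _ measurable_const, lintegral_const,
            measure_univ, mul_one]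
      _ ≤ Measure.pi (fun i => unifM lam (e₂ i)) s +
            ENNReal.ofReal (∑ i, |e₁ i - e₂ i| / lam) := by
          have hQint : ∫⁻ x, Q₂ x ∂(unifM lam (e₂ 0)) =
              Measure.pi (fun i => unifM lam (e₂ i)) s := by
            rw [hps₂, Measure.prod_apply ht]
          rw [hQint, Fin.sum_univ_succ, add_assoc]
          gcongr
          rw [ENNReal.ofReal_add (by positivity) (by positivity), add_comm]
          apply le_of_eq
          congr 2

theorem tv_masked_l1_bound {N : ℕ} (lam : ℝ) (hlam : 0 < lam)
    (μ : Measure ℝ) [IsProbabilityMeasure μ]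
    (hμ : μ = (ENNReal.ofReal lam)⁻¹ • volume.restrict (Set.Icc (-(lam/2)) (lam/2)))
    (e₁ e₂ : Fin N → ℝ) :
    tvDist (Measure.map (fun m => e₁ + m) (Measure.pi fun _ : Fin N => μ))
           (Measure.map (fun m => e₂ + m) (Measure.pi fun _ : Fin N => μ)) ≤
      min ((∑ i : Fin N, |e₁ i - e₂ i|) / lam) 1 := by
  haveI : ∀ a : ℝ, IsProbabilityMeasure (unifM lam a) := fun a => unifM_isProb hlam a
  have hmap : ∀ e : Fin N → ℝ, Measure.map (fun m => e + m) (Measure.pi fun _ : Fin N => μ) =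
      Measure.pi (fun i => unifM lam (e i)) := by
    intro e
    have h := measurePreserving_pi (fun _ : Fin N => μ) (fun i => unifM lam (e i))
      (f := fun i x => e i + x) (fun i => ⟨measurable_const_add _, map_shift hlam μ hμ (e i)⟩)
    exact h.map_eq
  rw [hmap e₁, hmap e₂, tvDist]
  have key : ∀ (f₁ f₂ : Fin N → ℝ) (s : Set (Fin N → ℝ)), MeasurableSet s →
      (Measure.pi (fun i => unifM lam (f₁ i)) s).toReal ≤
        (Measure.pi (fun i => unifM lam (f₂ i)) s).toReal +
          (∑ i : Fin N, |f₁ i - f₂ i|) / lam := by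
    intro f₁ f₂ s hs
    have h := pi_shift_le hlam N f₁ f₂ s hs
    have h2 := ENNReal.toReal_mono
      (ENNReal.add_ne_top.mpr ⟨measure_ne_top _ _, ENNReal.ofReal_ne_top⟩) h
    rw [ENNReal.toReal_add (measure_ne_top _ _) ENNReal.ofReal_ne_top,
      ENNReal.toReal_ofReal (by positivity)] at h2
    rw [Finset.sum_div] at *
    exact h2
  apply ciSup_le
  rintro ⟨s, hs⟩
  have h1 : (Measure.pi (fun i => unifM lam (e₁ i)) s).toReal ≤ 1 := by
    simpa using ENNReal.toReal_mono ENNReal.one_ne_top (prob_le_one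
      (μ := Measure.pi (fun i => unifM lam (e₁ i))) (s := s))
  have h2 : (Measure.pi (fun i => unifM lam (e₂ i)) s).toReal ≤ 1 := by
    simpa using ENNReal.toReal_mono ENNReal.one_ne_top (prob_le_one
      (μ := Measure.pi (fun i => unifM lam (e₂ i))) (s := s))
  have h3 := ENNReal.toReal_nonneg (a := Measure.pi (fun i => unifM lam (e₁ i)) s)
  have h4 := ENNReal.toReal_nonneg (a := Measure.pi (fun i => unifM lam (e₂ i)) s)
  have k1 := key e₁ e₂ s hs
  have k2 := key e₂ e₁ s hs
  have hsum : ∑ i : Fin N, |e₂ i - e₁ i| = ∑ i : Fin N, |e₁ i - e₂ i| :=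
    Finset.sum_congr rfl fun i _ => abs_sub_comm _ _
  rw [hsum] at k2
  rw [le_min_iff]
  constructor <;> rw [abs_sub_le_iff] <;> constructor <;> linarith
end

section
/- Let m ∈ ℝ^N have i.i.d. uniform coordinates on [−λ/2, λ/2] and e₁, e₂ ∈ ℝ^N. An adversary observing ê = e_b + m (b uniform on {1,2}) guesses b correctly with probability at most 1/2 + (1/2)·min(‖e₁ − e₂‖₁/λ, 1). -/
open MeasureTheory

section Aux

variable {lam : ℝ} (hlam : 0 < lam)

/-- translation by `d` modulo the interval `Ioc a (a+lam)` -/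
noncomputable def shiftMod (hlam : 0 < lam) (a d x : ℝ) : ℝ :=
  toIocMod hlam a (x + d)

lemma shiftMod_eq_circle (a d x : ℝ) :
    haveI : Fact (0 < lam) := ⟨hlam⟩
    shiftMod hlam a d x =
      ((AddCircle.equivIoc lam a ((x + d : ℝ) : AddCircle lam)) : ℝ) := by
  haveI : Fact (0 < lam) := ⟨hlam⟩
  rw [shiftMod, AddCircle.equivIoc, QuotientAddGroup.equivIocMod_coe]

lemma measurePreserving_circle_repr (a : ℝ) :
    haveI : Fact (0 < lam) := ⟨hlam⟩
    MeasurePreserving (fun q : AddCircle lam => ((AddCircle.equivIoc lam a q : ℝ)))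
      volume (volume.restrict (Set.Ioc a (a + lam))) := by
  haveI : Fact (0 < lam) := ⟨hlam⟩
  have hmeas : Measurable (fun q : AddCircle lam => ((AddCircle.equivIoc lam a q : ℝ))) := by
    have : (fun q : AddCircle lam => ((AddCircle.equivIoc lam a q : ℝ))) =
        (Subtype.val) ∘ (AddCircle.measurableEquivIoc lam a) := rfl
    rw [this]
    exact measurable_subtype_coe.comp (AddCircle.measurableEquivIoc lam a).measurable
  refine ⟨hmeas, ?_⟩
  have hmk := AddCircle.measurePreserving_mk lam a
  rw [← hmk.map_eq, Measure.map_map hmeas AddCircle.measurable_mk']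
  have hcomp : (fun q : AddCircle lam => ((AddCircle.equivIoc lam a q : ℝ))) ∘
      ((↑) : ℝ → AddCircle lam) = toIocMod hlam a := by
    funext x
    simp only [Function.comp_apply, AddCircle.equivIoc, QuotientAddGroup.equivIocMod_coe]
  rw [hcomp]
  have : toIocMod hlam a =ᵐ[volume.restrict (Set.Ioc a (a + lam))] id := by
    filter_upwards [ae_restrict_mem measurableSet_Ioc] with x hx
    exact (toIocMod_eq_self _).2 hx
  rw [Measure.map_congr this, Measure.map_id]

lemma measurePreserving_shiftMod (μ : Measure ℝ)
    (hμ : μ = (ENNReal.ofReal lam)⁻¹ • volume.restrict (Set.Ioc (-(lam/2)) (-(lam/2) + lam)))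
    (d : ℝ) :
    MeasurePreserving (shiftMod hlam (-(lam/2)) d) μ μ := by
  haveI : Fact (0 < lam) := ⟨hlam⟩
  set a := -(lam/2)
  have key : MeasurePreserving (shiftMod hlam a d)
      (volume.restrict (Set.Ioc a (a + lam))) (volume.restrict (Set.Ioc a (a + lam))) := by
    have h1 := AddCircle.measurePreserving_mk lam a
    have h2 : MeasurePreserving (fun q : AddCircle lam => q + ((d : ℝ) : AddCircle lam))
        volume volume := measurePreserving_add_right volume _
    have h3 := measurePreserving_circle_repr hlam a
    have hcomp : shiftMod hlam a d =
        (fun q : AddCircle lam => ((AddCircle.equivIoc lam a q : ℝ))) ∘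
          ((fun q : AddCircle lam => q + ((d : ℝ) : AddCircle lam)) ∘
            ((↑) : ℝ → AddCircle lam)) := by
      funext x
      simp only [Function.comp_apply]
      rw [shiftMod_eq_circle hlam a d x]
      norm_cast
    rw [hcomp]
    exact h3.comp (h2.comp h1)
  rw [hμ]
  exact ⟨key.measurable, by rw [Measure.map_smul, key.map_eq]⟩

lemma shiftMod_bad_measurable (a d : ℝ) :
    MeasurableSet {x : ℝ | shiftMod hlam a d x ≠ x + d} := by
  have : {x : ℝ | shiftMod hlam a d x ≠ x + d} =
      ((fun x => x + d) ⁻¹' (Set.Ioc a (a + lam)))ᶜ := by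
    ext x
    simp only [Set.mem_setOf_eq, Set.mem_compl_iff, Set.mem_preimage, shiftMod]
    rw [not_iff_comm, not_not, toIocMod_eq_self]
  rw [this]
  exact ((measurable_add_const d) measurableSet_Ioc).compl

lemma shiftMod_bad_measure (μ : Measure ℝ)
    (hμ : μ = (ENNReal.ofReal lam)⁻¹ • volume.restrict (Set.Ioc (-(lam/2)) (-(lam/2) + lam)))
    (d : ℝ) :
    μ {x : ℝ | shiftMod hlam (-(lam/2)) d x ≠ x + d} ≤ ENNReal.ofReal (|d| / lam) := by
  set a := -(lam/2) with ha
  have hsub : {x : ℝ | shiftMod hlam a d x ≠ x + d} ∩ Set.Ioc a (a + lam) ⊆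
      Set.Icc a (a - d) ∪ Set.Ioc (a + lam - d) (a + lam) := by
    rintro x ⟨hbad, hx⟩
    simp only [Set.mem_setOf_eq, shiftMod] at hbad
    have hnot : x + d ∉ Set.Ioc a (a + lam) := by
      intro hmem
      exact hbad ((toIocMod_eq_self _).2 hmem)
    simp only [Set.mem_Ioc, not_and_or, not_lt, not_le] at hnot
    rcases hnot with h | h
    · exact Or.inl ⟨hx.1.le, by linarith⟩
    · exact Or.inr ⟨by linarith, hx.2⟩
  rw [hμ]
  have hb := shiftMod_bad_measurable hlam a d
  simp only [Measure.smul_apply, smul_eq_mul]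
  rw [Measure.restrict_apply hb]
  have hle : volume ({x : ℝ | shiftMod hlam a d x ≠ x + d} ∩ Set.Ioc a (a + lam)) ≤
      ENNReal.ofReal |d| := by
    refine le_trans (measure_mono hsub) ?_
    refine le_trans (measure_union_le _ _) ?_
    rw [Real.volume_Icc, Real.volume_Ioc]
    have : (a - d - a) = -d := by ring
    rw [this]
    have : (a + lam - (a + lam - d)) = d := by ring
    rw [this]
    rcases le_or_gt d 0 with h | h
    · rw [abs_of_nonpos h, ENNReal.ofReal_eq_zero.2 h, add_zero]
    · rw [abs_of_pos h, ENNReal.ofReal_eq_zero.2 (by linarith), zero_add]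
  calc (ENNReal.ofReal lam)⁻¹ * volume ({x : ℝ | shiftMod hlam a d x ≠ x + d} ∩ Set.Ioc a (a + lam))
      ≤ (ENNReal.ofReal lam)⁻¹ * ENNReal.ofReal |d| := by
        exact mul_le_mul_right hle _
    _ = ENNReal.ofReal (|d| / lam) := by
        rw [ENNReal.ofReal_div_of_pos hlam, div_eq_mul_inv, mul_comm]

end Aux

theorem masked_distinguishing_bound {N : ℕ} (lam : ℝ) (hlam : 0 < lam)
    (μ : Measure ℝ) [IsProbabilityMeasure μ]
    (hμ : μ = (ENNReal.ofReal lam)⁻¹ • volume.restrict (Set.Icc (-(lam/2)) (lam/2)))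
    (e₁ e₂ : Fin N → ℝ)
    (A : Set (Fin N → ℝ)) (hA : MeasurableSet A) :
    (1/2) * ((Measure.map (fun m => e₁ + m) (Measure.pi fun _ : Fin N => μ) A).toReal +
             (Measure.map (fun m => e₂ + m) (Measure.pi fun _ : Fin N => μ) Aᶜ).toReal) ≤
      1/2 + (1/2) * min ((∑ i : Fin N, |e₁ i - e₂ i|) / lam) 1 := by
  have hμ' : μ = (ENNReal.ofReal lam)⁻¹ •
      volume.restrict (Set.Ioc (-(lam/2)) (-(lam/2) + lam)) := by
    rw [hμ]
    congr 1
    rw [restrict_Ioc_eq_restrict_Icc]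
    congr 1
    ring
  set π := Measure.pi fun _ : Fin N => μ with hπ
  set δ : Fin N → ℝ := fun i => e₂ i - e₁ i with hδ
  -- the coupling map
  set T : (Fin N → ℝ) → (Fin N → ℝ) := fun m i => shiftMod hlam (-(lam/2)) (δ i) (m i) with hT
  have hTmp : MeasurePreserving T π π :=
    measurePreserving_pi _ _ (fun i => measurePreserving_shiftMod hlam μ hμ' (δ i))
  have hadd : ∀ e : Fin N → ℝ, Measurable (fun m : Fin N → ℝ => e + m) := fun e =>
    measurable_pi_lambda _ fun i => by fun_prop
  set P := Measure.map (fun m => e₁ + m) π with hP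
  set Q := Measure.map (fun m => e₂ + m) π with hQ
  haveI : IsProbabilityMeasure P := Measure.isProbabilityMeasure_map (hadd e₁).aemeasurable
  haveI : IsProbabilityMeasure Q := Measure.isProbabilityMeasure_map (hadd e₂).aemeasurable
  -- key inequality in ℝ≥0∞
  have hPA : P A = π ((fun m => e₁ + T m) ⁻¹' A) := by
    rw [hP, Measure.map_apply (hadd e₁) hA]
    have := hTmp.measure_preimage (s := (fun m => e₁ + m) ⁻¹' A)
      ((hadd e₁ hA).nullMeasurableSet)
    rw [← this]
    rfl
  have hQA : Q A = π ((fun m => e₂ + m) ⁻¹' A) := Measure.map_apply (hadd e₂) hA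
  have hBad : ∀ i, π {m : Fin N → ℝ | shiftMod hlam (-(lam/2)) (δ i) (m i) ≠ m i + δ i} ≤
      ENNReal.ofReal (|δ i| / lam) := by
    intro i
    have hBm := shiftMod_bad_measurable hlam (-(lam/2)) (δ i)
    have hset : {m : Fin N → ℝ | shiftMod hlam (-(lam/2)) (δ i) (m i) ≠ m i + δ i} =
        Set.pi Set.univ (fun j => if j = i then
          {x : ℝ | shiftMod hlam (-(lam/2)) (δ i) x ≠ x + δ i} else Set.univ) := by
      ext m
      simp only [Set.mem_setOf_eq, Set.mem_pi, Set.mem_univ, forall_true_left]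
      constructor
      · intro h j
        by_cases hj : j = i
        · subst hj; simp [h]
        · simp [hj]
      · intro h
        have := h i
        simpa using this
    rw [hset, hπ, Measure.pi_pi]
    have : ∀ j : Fin N, μ (if j = i then
        {x : ℝ | shiftMod hlam (-(lam/2)) (δ i) x ≠ x + δ i} else Set.univ) =
        if j = i then μ {x : ℝ | shiftMod hlam (-(lam/2)) (δ i) x ≠ x + δ i} else 1 := by
      intro j
      by_cases hj : j = i <;> simp [hj]
    simp_rw [this]
    rw [Finset.prod_ite_eq' Finset.univ i
      (fun _ => μ {x : ℝ | shiftMod hlam (-(lam/2)) (δ i) x ≠ x + δ i})]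
    simp only [Finset.mem_univ, if_true]
    exact shiftMod_bad_measure hlam μ hμ' (δ i)
  have hsubset : (fun m => e₁ + T m) ⁻¹' A ⊆
      ((fun m => e₂ + m) ⁻¹' A) ∪
        ⋃ i : Fin N, {m : Fin N → ℝ | shiftMod hlam (-(lam/2)) (δ i) (m i) ≠ m i + δ i} := by
    intro m hm
    by_cases hall : ∀ i, shiftMod hlam (-(lam/2)) (δ i) (m i) = m i + δ i
    · left
      have : e₁ + T m = e₂ + m := by
        funext i
        simp only [Pi.add_apply, hT]
        rw [hall i]
        simp only [hδ]
        ring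
      simpa [Set.mem_preimage, ← this] using hm
    · right
      push_neg at hall
      obtain ⟨i, hi⟩ := hall
      exact Set.mem_iUnion.2 ⟨i, hi⟩
  have hkey : P A ≤ Q A + ENNReal.ofReal ((∑ i : Fin N, |e₁ i - e₂ i|) / lam) := by
    rw [hPA, hQA]
    calc π ((fun m => e₁ + T m) ⁻¹' A)
        ≤ π (((fun m => e₂ + m) ⁻¹' A) ∪
          ⋃ i : Fin N, {m : Fin N → ℝ | shiftMod hlam (-(lam/2)) (δ i) (m i) ≠ m i + δ i}) :=
          measure_mono hsubset
      _ ≤ π ((fun m => e₂ + m) ⁻¹' A) +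
          π (⋃ i : Fin N, {m : Fin N → ℝ | shiftMod hlam (-(lam/2)) (δ i) (m i) ≠ m i + δ i}) :=
          measure_union_le _ _
      _ ≤ π ((fun m => e₂ + m) ⁻¹' A) + ∑ i : Fin N, ENNReal.ofReal (|δ i| / lam) := by
          gcongr
          refine le_trans (measure_iUnion_fintype_le _ _) ?_
          exact Finset.sum_le_sum fun i _ => hBad i
      _ = π ((fun m => e₂ + m) ⁻¹' A) +
          ENNReal.ofReal ((∑ i : Fin N, |e₁ i - e₂ i|) / lam) := by
          congr 1
          have hs : (∑ i : Fin N, |e₁ i - e₂ i|) / lam = ∑ i : Fin N, |δ i| / lam := by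
            rw [Finset.sum_div]
            exact Finset.sum_congr rfl fun i _ => by rw [hδ, abs_sub_comm]
          rw [hs, ENNReal.ofReal_sum_of_nonneg (fun i _ => by positivity)]
  -- pass to real numbers
  have hQc : (Q Aᶜ).toReal = 1 - (Q A).toReal := by
    rw [measure_compl hA (measure_ne_top _ _), measure_univ,
      ENNReal.toReal_sub_of_le prob_le_one ENNReal.one_ne_top, ENNReal.toReal_one]
  have h1 : (P A).toReal ≤ 1 := by
    have := ENNReal.toReal_mono ENNReal.one_ne_top (prob_le_one (μ := P) (s := A))
    simpa using this
  have h2 : (0:ℝ) ≤ (Q A).toReal := ENNReal.toReal_nonneg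
  have h3 : (P A).toReal ≤ (Q A).toReal + (∑ i : Fin N, |e₁ i - e₂ i|) / lam := by
    have hfin : Q A + ENNReal.ofReal ((∑ i : Fin N, |e₁ i - e₂ i|) / lam) ≠ ⊤ :=
      ENNReal.add_ne_top.2 ⟨measure_ne_top _ _, ENNReal.ofReal_ne_top⟩
    have := ENNReal.toReal_mono hfin hkey
    rwa [ENNReal.toReal_add (measure_ne_top _ _) ENNReal.ofReal_ne_top,
      ENNReal.toReal_ofReal (by positivity)] at this
  have hmin : (P A).toReal - (Q A).toReal ≤
      min ((∑ i : Fin N, |e₁ i - e₂ i|) / lam) 1 :=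
    le_min (by linarith) (by linarith)
  rw [hQc]
  have hminle := hmin
  linarith [min_le_left ((∑ i : Fin N, |e₁ i - e₂ i|) / lam) (1:ℝ)]
end
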